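/- Let C be an infinite-dimensional closed convex subset of a complete linear metric space Y. Then there exists an injective continuous affine map T : ℓ² → Y such that T⁻¹(C) is a closed convex subset of ℓ² with nonempty interior. -/

import Mathlib

open Filter Topology Set
set_option linter.unusedSectionVars false

namespace Stmt8Aux


noncomputable def prefF {α : Type*} (z : α) (P : ∀ n : ℕ, (Fin n → α) → α → Prop)
    (h : ∀ n f, ∃ a, P n f a) : ℕ → ℕ → α
  | 0 => fun _ => z
  | (n+1) => fun i => if i = n then Classical.choose (h n (fun j => prefF z P h n j))
      else prefF z P h n i

noncomputable def chooseSeq {α : Type*} (z : α) (P : ∀ n : ℕ, (Fin n → α) → α → Prop)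
    (h : ∀ n f, ∃ a, P n f a) : ℕ → α := fun n => prefF z P h (n+1) n

theorem prefF_agree {α : Type*} (z : α) (P : ∀ n : ℕ, (Fin n → α) → α → Prop)
    (h : ∀ n f, ∃ a, P n f a) {n m i : ℕ} (hi : i < n) (hnm : n ≤ m) :
    prefF z P h m i = prefF z P h n i := by
  induction m with
  | zero => omega
  | succ m ih =>
    rcases Nat.eq_or_lt_of_le hnm with heq | hlt
    · rw [heq]
    · have h1 : n ≤ m := by omega
      have h2 : i ≠ m := by omega
      rw [prefF]
      simp only [h2, if_false]
      exact ih h1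

theorem chooseSeq_eq {α : Type*} (z : α) (P : ∀ n : ℕ, (Fin n → α) → α → Prop)
    (h : ∀ n f, ∃ a, P n f a) (n : ℕ) :
    chooseSeq z P h n = Classical.choose (h n (fun j : Fin n => chooseSeq z P h j)) := by
  show prefF z P h (n+1) n = _
  rw [prefF]
  show (if n = n then _ else _) = _
  rw [if_pos rfl]
  have heq : (fun j : Fin n => prefF z P h n j) = (fun j : Fin n => chooseSeq z P h j) := by
    funext j
    exact prefF_agree z P h (Nat.lt_succ_self _) j.isLt
  simp only [heq]

theorem chooseSeq_spec {α : Type*} (z : α) (P : ∀ n : ℕ, (Fin n → α) → α → Prop)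
    (h : ∀ n f, ∃ a, P n f a) (n : ℕ) :
    P n (fun i => chooseSeq z P h i) (chooseSeq z P h n) := by
  rw [chooseSeq_eq]
  exact Classical.choose_spec (h n _)

variable {Y : Type*} [MetricSpace Y] [AddCommGroup Y] [Module ℝ Y]
  [IsTopologicalAddGroup Y] [ContinuousSMul ℝ Y]

noncomputable def eta (y₀ : Y) {k : ℕ} (v : Fin k → Y) (u : Y) : ℝ :=
  sInf ((fun s : Fin k → ℝ => dist (y₀ + ∑ i, s i • v i + u) y₀) ''
    (Set.univ.pi fun _ => Set.Icc (-1 : ℝ) 1))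

theorem eta_nonneg (y₀ : Y) {k : ℕ} (v : Fin k → Y) (u : Y) : 0 ≤ eta y₀ v u :=
  Real.sInf_nonneg (by rintro x ⟨s, -, rfl⟩; exact dist_nonneg)

theorem eta_le (y₀ : Y) {k : ℕ} (v : Fin k → Y) (u : Y) {s : Fin k → ℝ}
    (hs : ∀ i, |s i| ≤ 1) :
    eta y₀ v u ≤ dist (y₀ + ∑ i, s i • v i + u) y₀ := by
  apply csInf_le
  · exact ⟨0, by rintro x ⟨s', -, rfl⟩; exact dist_nonneg⟩
  · exact ⟨s, Set.mem_univ_pi.2 fun i => Set.mem_Icc.2 (abs_le.1 (hs i)), rfl⟩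

theorem eta_pos (y₀ : Y) {k : ℕ} (v : Fin k → Y) (u : Y)
    (hu : u ∉ Submodule.span ℝ (Set.range v)) : 0 < eta y₀ v u := by
  have hcomp : IsCompact (Set.univ.pi fun _ : Fin k => Set.Icc (-1 : ℝ) 1) :=
    isCompact_univ_pi fun _ => isCompact_Icc
  have hne : (Set.univ.pi fun _ : Fin k => Set.Icc (-1 : ℝ) 1).Nonempty :=
    ⟨0, Set.mem_univ_pi.2 fun _ => by norm_num⟩
  have hcont : Continuous (fun s : Fin k → ℝ => dist (y₀ + ∑ i, s i • v i + u) y₀) := by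
    refine Continuous.dist ?_ continuous_const
    exact (continuous_const.add (continuous_finset_sum _ fun i _ =>
      (continuous_apply i).smul continuous_const)).add continuous_const
  obtain ⟨s₀, hs₀mem, hmin⟩ := hcomp.exists_isMinOn hne hcont.continuousOn
  have hpos : 0 < dist (y₀ + ∑ i, s₀ i • v i + u) y₀ := by
    rw [dist_pos]
    intro h
    apply hu
    have h2 : ∑ i, s₀ i • v i + u = 0 := by
      have h3 : y₀ + (∑ i, s₀ i • v i + u) = y₀ + 0 := by
        rw [add_zero, ← add_assoc]; exact h
      exact add_left_cancel h3
    have h4 : u = -(∑ i, s₀ i • v i) := by linear_combination (norm := abel) h2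
    rw [h4]
    exact Submodule.neg_mem _ (Submodule.sum_mem _ fun i _ =>
      Submodule.smul_mem _ _ (Submodule.subset_span (Set.mem_range_self i)))
  refine lt_of_lt_of_le hpos (le_csInf ⟨_, ⟨s₀, hs₀mem, rfl⟩⟩ ?_)
  rintro b ⟨s, hsmem, rfl⟩
  exact isMinOn_iff.1 hmin s hsmem

theorem exists_small_mu (y₀ : Y) {m : ℕ} (v : Fin m → Y) (u : Y) (cap : ℝ)
    {ε δ₀ : ℝ} (hε : 0 < ε) (hδ₀ : 0 < δ₀) :
    ∃ μ : ℝ, 0 < μ ∧ μ ≤ δ₀ ∧ ∀ (s : Fin m → ℝ) (t : ℝ), (∀ i, |s i| ≤ cap) → |t| ≤ cap →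
      dist (y₀ + ∑ i, s i • v i + (t * μ) • u) (y₀ + ∑ i, s i • v i) ≤ ε := by
  set Φ : ((Fin m → ℝ) × ℝ × ℝ) → ℝ := fun p =>
    dist (y₀ + ∑ i, p.1 i • v i + (p.2.1 * p.2.2) • u) (y₀ + ∑ i, p.1 i • v i) with hΦ
  have hΦcont : Continuous Φ := by
    have h1 : Continuous fun p : ((Fin m → ℝ) × ℝ × ℝ) => y₀ + ∑ i, p.1 i • v i :=
      continuous_const.add (continuous_finset_sum _ fun i _ =>
        ((continuous_apply i).comp continuous_fst).smul continuous_const)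
    exact Continuous.dist (h1.add (((continuous_fst.comp continuous_snd).mul
      (continuous_snd.comp continuous_snd)).smul continuous_const)) h1
  set K : Set ((Fin m → ℝ) × ℝ × ℝ) :=
    (Set.univ.pi fun _ => Set.Icc (-cap) cap) ×ˢ (Set.Icc (-cap) cap) ×ˢ (Set.Icc 0 δ₀) with hK
  have hKcomp : IsCompact K :=
    (isCompact_univ_pi fun _ => isCompact_Icc).prod (isCompact_Icc.prod isCompact_Icc)
  have hUC := hKcomp.uniformContinuousOn_of_continuous hΦcont.continuousOn
  rw [Metric.uniformContinuousOn_iff] at hUC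
  obtain ⟨δ, hδpos, hδ⟩ := hUC ε hε
  refine ⟨min δ₀ (δ / 2), lt_min hδ₀ (by linarith), min_le_left _ _, ?_⟩
  intro s t hs ht
  have hsmem : s ∈ Set.univ.pi fun _ : Fin m => Set.Icc (-cap) cap :=
    Set.mem_univ_pi.2 fun i => Set.mem_Icc.2 (abs_le.1 (hs i))
  have htmem : t ∈ Set.Icc (-cap) cap := Set.mem_Icc.2 (abs_le.1 ht)
  have hμmem : min δ₀ (δ / 2) ∈ Set.Icc (0:ℝ) δ₀ :=
    Set.mem_Icc.2 ⟨le_of_lt (lt_min hδ₀ (by linarith)), min_le_left _ _⟩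
  have h0mem : (0:ℝ) ∈ Set.Icc (0:ℝ) δ₀ := Set.mem_Icc.2 ⟨le_refl _, le_of_lt hδ₀⟩
  have hp : (s, t, min δ₀ (δ / 2)) ∈ K := ⟨hsmem, htmem, hμmem⟩
  have hq : (s, t, (0:ℝ)) ∈ K := ⟨hsmem, htmem, h0mem⟩
  have hdist : dist ((s, t, min δ₀ (δ / 2)) : (Fin m → ℝ) × ℝ × ℝ) (s, t, 0) < δ := by
    rw [Prod.dist_eq, Prod.dist_eq]
    simp only [dist_self]
    have : dist (min δ₀ (δ / 2)) (0:ℝ) = min δ₀ (δ / 2) := by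
      rw [Real.dist_eq, sub_zero, abs_of_pos (lt_min hδ₀ (by linarith))]
    rw [this]
    have h1 : min δ₀ (δ / 2) ≤ δ / 2 := min_le_right _ _
    have : max (0:ℝ) (max 0 (min δ₀ (δ / 2))) ≤ δ / 2 :=
      max_le (by linarith) (max_le (by linarith) h1)
    calc (0:ℝ) ⊔ ((0:ℝ) ⊔ min δ₀ (δ / 2)) ≤ δ / 2 := this
    _ < δ := by linarith
  have := hδ _ hp _ hq hdist
  have hΦq : Φ (s, t, 0) = 0 := by
    simp only [hΦ, mul_zero, zero_smul, add_zero, dist_self]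
  rw [Real.dist_eq, hΦq, sub_zero] at this
  calc Φ (s, t, min δ₀ (δ / 2)) ≤ |Φ (s, t, min δ₀ (δ / 2))| := le_abs_self _
  _ ≤ ε := le_of_lt this

theorem exists_new_dir {C : Set Y} (hinfdim : ¬ FiniteDimensional ℝ (Submodule.span ℝ C))
    (c₀ : Y) (F : Submodule ℝ Y) (hF : FiniteDimensional ℝ F) :
    ∃ c ∈ C, c - c₀ ∉ F := by
  by_contra h
  push_neg at h
  apply hinfdim
  have hle : Submodule.span ℝ C ≤ F ⊔ Submodule.span ℝ {c₀} := by
    rw [Submodule.span_le]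
    intro c hc
    have h1 : c - c₀ ∈ F := h c hc
    have h2 : c = (c - c₀) + c₀ := (sub_add_cancel c c₀).symm
    rw [h2]
    exact Submodule.add_mem _ (Submodule.mem_sup_left h1)
      (Submodule.mem_sup_right (Submodule.mem_span_singleton_self c₀))
  haveI := hF
  haveI : FiniteDimensional ℝ (F ⊔ Submodule.span ℝ {c₀} : Submodule ℝ Y) :=
    Submodule.finiteDimensional_sup F (Submodule.span ℝ {c₀})
  exact Submodule.finiteDimensional_of_le hle

variable (y₀ : Y)

noncomputable def sv (y₀ : Y) (g : ℕ → Y × ℝ) (i : ℕ) : Y := (g i).2 • ((g i).1 - y₀)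

noncomputable def etaAt (y₀ : Y) (g : ℕ → Y × ℝ) (j : ℕ) : ℝ :=
  eta y₀ (fun i : Fin j => sv y₀ g i) (sv y₀ g j)

noncomputable def epsAt (y₀ : Y) (g : ℕ → Y × ℝ) (n : ℕ) : ℝ :=
  (1/2 : ℝ)^(n+1) * ∏ j ∈ Finset.range n, min 1 (etaAt y₀ g j)

def QProp (y₀ : Y) (C : Set Y) (g : ℕ → Y × ℝ) (i : ℕ) : Prop :=
  (g i).1 ∈ C ∧ ((g i).1 - y₀ ∉ Submodule.span ℝ ((fun j => (g j).1 - y₀) '' Set.Iio i)) ∧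
  0 < (g i).2 ∧ (g i).2 ≤ (1/2 : ℝ)^(i+3)

noncomputable def partSum (y₀ : Y) (g : ℕ → Y × ℝ) (s : ℕ → ℝ) (n : ℕ) : Y :=
  y₀ + ∑ i ∈ Finset.range n, s i • sv y₀ g i

def SmallProp (y₀ : Y) (g : ℕ → Y × ℝ) (n : ℕ) : Prop :=
  ∀ s : ℕ → ℝ, (∀ i, i ≤ n → |s i| ≤ n + 2) →
    dist (partSum y₀ g s n + s n • sv y₀ g n) (partSum y₀ g s n) ≤ epsAt y₀ g n

theorem etaAt_congr {g g' : ℕ → Y × ℝ} {j : ℕ} (h : ∀ i, i ≤ j → g i = g' i) :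
    etaAt y₀ g j = etaAt y₀ g' j := by
  unfold etaAt
  have h1 : (fun i : Fin j => sv y₀ g i) = fun i : Fin j => sv y₀ g' i := by
    funext i; unfold sv; rw [h i (le_of_lt i.isLt)]
  have h2 : sv y₀ g j = sv y₀ g' j := by unfold sv; rw [h j (le_refl j)]
  rw [h1, h2]

theorem epsAt_congr {g g' : ℕ → Y × ℝ} {n : ℕ} (h : ∀ i, i < n → g i = g' i) :
    epsAt y₀ g n = epsAt y₀ g' n := by
  unfold epsAt
  congr 1
  apply Finset.prod_congr rfl
  intro j hj
  rw [Finset.mem_range] at hj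
  rw [etaAt_congr y₀ (fun i hi => h i (lt_of_le_of_lt hi hj))]

theorem QProp_congr {C : Set Y} {g g' : ℕ → Y × ℝ} {i : ℕ} (h : ∀ j, j ≤ i → g j = g' j) :
    QProp y₀ C g i ↔ QProp y₀ C g' i := by
  unfold QProp
  rw [h i (le_refl i)]
  have himg : (fun j => (g j).1 - y₀) '' Set.Iio i = (fun j => (g' j).1 - y₀) '' Set.Iio i :=
    Set.image_congr fun j hj => by rw [h j (le_of_lt hj)]
  rw [himg]

theorem etaAt_pos {C : Set Y} {g : ℕ → Y × ℝ} {j : ℕ} (hq : QProp y₀ C g j) :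
    0 < etaAt y₀ g j := by
  apply eta_pos
  intro hmem
  have hle : Submodule.span ℝ (Set.range fun i : Fin j => sv y₀ g i) ≤
      Submodule.span ℝ ((fun l => (g l).1 - y₀) '' Set.Iio j) := by
    rw [Submodule.span_le]
    rintro _ ⟨i, rfl⟩
    exact Submodule.smul_mem _ _ (Submodule.subset_span ⟨i, i.isLt, rfl⟩)
  have h2 := hle hmem
  have hμ : (0:ℝ) < (g j).2 := hq.2.2.1
  have h3 : (g j).1 - y₀ ∈ Submodule.span ℝ ((fun l => (g l).1 - y₀) '' Set.Iio j) := by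
    have h4 := Submodule.smul_mem _ ((g j).2)⁻¹ h2
    rwa [sv, smul_smul, inv_mul_cancel₀ (ne_of_gt hμ), one_smul] at h4
  exact hq.2.1 h3

theorem epsAt_nonneg (g : ℕ → Y × ℝ) (n : ℕ) : 0 ≤ epsAt y₀ g n := by
  unfold epsAt
  apply mul_nonneg (by positivity)
  exact Finset.prod_nonneg fun j _ => le_min zero_le_one (eta_nonneg _ _ _)

theorem epsAt_le (g : ℕ → Y × ℝ) (n : ℕ) : epsAt y₀ g n ≤ (1/2 : ℝ)^(n+1) := by
  unfold epsAt
  have h1 : ∏ j ∈ Finset.range n, min 1 (etaAt y₀ g j) ≤ 1 :=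
    Finset.prod_le_one (fun j _ => le_min zero_le_one (eta_nonneg _ _ _))
      (fun j _ => min_le_left _ _)
  calc (1/2 : ℝ)^(n+1) * ∏ j ∈ Finset.range n, min 1 (etaAt y₀ g j)
      ≤ (1/2 : ℝ)^(n+1) * 1 := mul_le_mul_of_nonneg_left h1 (by positivity)
  _ = (1/2 : ℝ)^(n+1) := mul_one _

theorem epsAt_le_factor {C : Set Y} {g : ℕ → Y × ℝ} {k n : ℕ} (hkn : k < n)
    (hq : ∀ j, j < n → QProp y₀ C g j) :
    epsAt y₀ g n ≤ min 1 (etaAt y₀ g k) * (1/2 : ℝ)^(n+1) := by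
  unfold epsAt
  rw [mul_comm]
  apply mul_le_mul_of_nonneg_right _ (by positivity)
  have hk : k ∈ Finset.range n := Finset.mem_range.2 hkn
  rw [← Finset.mul_prod_erase _ _ hk]
  have h1 : ∏ j ∈ (Finset.range n).erase k, min 1 (etaAt y₀ g j) ≤ 1 :=
    Finset.prod_le_one (fun j _ => le_min zero_le_one (eta_nonneg _ _ _))
      (fun j _ => min_le_left _ _)
  calc min 1 (etaAt y₀ g k) * ∏ j ∈ (Finset.range n).erase k, min 1 (etaAt y₀ g j)
      ≤ min 1 (etaAt y₀ g k) * 1 :=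
        mul_le_mul_of_nonneg_left h1 (le_min zero_le_one (eta_nonneg _ _ _))
  _ = min 1 (etaAt y₀ g k) := mul_one _

def PChoice (y₀ : Y) (C : Set Y) (n : ℕ) (f : Fin n → Y × ℝ) (a : Y × ℝ) : Prop :=
  ∀ g : ℕ → Y × ℝ, (∀ i : Fin n, g i = f i) → g n = a →
    (∀ i, i < n → QProp y₀ C g i) → QProp y₀ C g n ∧ SmallProp y₀ g n

theorem exists_PChoice {C : Set Y}
    (hinfdim : ¬ FiniteDimensional ℝ (Submodule.span ℝ C))
    (n : ℕ) (f : Fin n → Y × ℝ) : ∃ a, PChoice y₀ C n f a := by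
  classical
  set g' : ℕ → Y × ℝ := fun i => if h : i < n then f ⟨i, h⟩ else (0, 0) with hg'
  have hg'f : ∀ i : Fin n, g' i = f i := fun i => by simp [hg', i.isLt]
  by_cases hgood : ∀ i, i < n → QProp y₀ C g' i
  case neg =>
    refine ⟨(0,0), ?_⟩
    intro g hg hgn hgoodg
    exfalso
    apply hgood
    intro i hi
    rw [← QProp_congr y₀ (g := g) (fun j hj => ?_)]
    · exact hgoodg i hi
    · have hjn : j < n := lt_of_le_of_lt hj hi
      rw [hg ⟨j, hjn⟩, hg'f ⟨j, hjn⟩]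
  case pos =>
    have heps : 0 < epsAt y₀ g' n := by
      unfold epsAt
      apply mul_pos (by positivity)
      apply Finset.prod_pos
      intro j hj
      rw [Finset.mem_range] at hj
      exact lt_min one_pos (etaAt_pos y₀ (hgood j hj))
    set F : Submodule ℝ Y := Submodule.span ℝ ((fun j => (g' j).1 - y₀) '' Set.Iio n) with hF
    haveI : FiniteDimensional ℝ F :=
      FiniteDimensional.span_of_finite ℝ ((Set.finite_Iio n).image _)
    obtain ⟨c, hcC, hcF⟩ := exists_new_dir hinfdim y₀ F inferInstance
    obtain ⟨μ, hμ0, hμδ, hμsmall⟩ := exists_small_mu y₀ (fun i : Fin n => sv y₀ g' i)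
      (c - y₀) ((n : ℝ) + 2) heps (pow_pos (by norm_num : (0:ℝ) < 1/2) (n+3))
    refine ⟨(c, μ), ?_⟩
    intro g hg hgn hgoodg
    have hagree : ∀ i, i < n → g i = g' i := by
      intro i hi
      rw [hg ⟨i, hi⟩, hg'f ⟨i, hi⟩]
    have himg : (fun j => (g j).1 - y₀) '' Set.Iio n = (fun j => (g' j).1 - y₀) '' Set.Iio n :=
      Set.image_congr fun j hj => by rw [hagree j hj]
    constructor
    · refine ⟨?_, ?_, ?_, ?_⟩
      · rw [hgn]; exact hcC
      · rw [hgn, himg]; exact hcF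
      · rw [hgn]; exact hμ0
      · rw [hgn]; exact hμδ
    · intro s hs
      have hsum : ∑ i ∈ Finset.range n, s i • sv y₀ g i = ∑ i : Fin n, s i • sv y₀ g' i := by
        rw [← Fin.sum_univ_eq_sum_range]
        apply Finset.sum_congr rfl
        intro i _
        unfold sv
        rw [hagree i i.isLt]
      have hlast : s n • sv y₀ g n = (s n * μ) • (c - y₀) := by
        unfold sv
        rw [hgn, smul_smul]
      have heq : epsAt y₀ g n = epsAt y₀ g' n := epsAt_congr y₀ hagree
      unfold partSum
      rw [hsum, hlast, heq]
      apply hμsmall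
      · intro i
        exact hs i (le_of_lt i.isLt)
      · exact hs n (le_refl n)

theorem dist_partSum_succ (y₀ : Y) (g : ℕ → Y × ℝ) (n : ℕ) (hsm : SmallProp y₀ g n)
    (s : ℕ → ℝ) (hb : ∀ i, i ≤ n → |s i| ≤ n + 2) :
    dist (partSum y₀ g s (n+1)) (partSum y₀ g s n) ≤ epsAt y₀ g n := by
  have h1 := hsm s hb
  have h2 : partSum y₀ g s (n+1) = partSum y₀ g s n + s n • sv y₀ g n := by
    unfold partSum
    rw [Finset.sum_range_succ, add_assoc]
  rw [h2]
  exact h1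

theorem dist_le_geom {u : ℕ → Y} {a : ℝ} (ha : 0 ≤ a) {n : ℕ}
    (h : ∀ m, n ≤ m → dist (u (m+1)) (u m) ≤ a * (1/2:ℝ)^(m+1)) :
    ∀ m, n ≤ m → dist (u n) (u m) ≤ a * ((1/2:ℝ)^n - (1/2:ℝ)^m) := by
  intro m hm
  induction m, hm using Nat.le_induction with
  | base => simp
  | succ m hm ih =>
    have e : a * ((1/2:ℝ)^n - (1/2:ℝ)^m) + a * (1/2:ℝ)^(m+1) = a * ((1/2:ℝ)^n - (1/2:ℝ)^(m+1)) := by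
      rw [pow_succ]; ring
    calc dist (u n) (u (m+1)) ≤ dist (u n) (u m) + dist (u m) (u (m+1)) := dist_triangle _ _ _
    _ ≤ a * ((1/2:ℝ)^n - (1/2:ℝ)^m) + a * (1/2:ℝ)^(m+1) := by
        refine add_le_add ih ?_
        rw [dist_comm]
        exact h m hm
    _ = a * ((1/2:ℝ)^n - (1/2:ℝ)^(m+1)) := e

theorem dist_le_geom_limit {u : ℕ → Y} {L : Y} {a : ℝ} (ha : 0 ≤ a) {n : ℕ}
    (h : ∀ m, n ≤ m → dist (u (m+1)) (u m) ≤ a * (1/2:ℝ)^(m+1))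
    (hL : Tendsto u atTop (𝓝 L)) :
    dist (u n) L ≤ a * (1/2:ℝ)^n := by
  have h1 : Tendsto (fun m => dist (u n) (u m)) atTop (𝓝 (dist (u n) L)) :=
    tendsto_const_nhds.dist hL
  apply le_of_tendsto h1
  filter_upwards [eventually_ge_atTop n] with m hm
  calc dist (u n) (u m) ≤ a * ((1/2:ℝ)^n - (1/2:ℝ)^m) := dist_le_geom ha h m hm
  _ ≤ a * (1/2:ℝ)^n := by
      apply mul_le_mul_of_nonneg_left _ ha
      have : (0:ℝ) ≤ (1/2:ℝ)^m := by positivity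
      linarith

theorem partSum_mem {C : Set Y} (hconv : Convex ℝ C) {y₀ : Y} (hy₀ : y₀ ∈ C) {g : ℕ → Y × ℝ}
    (hQ : ∀ i, QProp y₀ C g i) {t : ℕ → ℝ} (ht0 : ∀ i, 0 ≤ t i) (ht2 : ∀ i, t i ≤ 2) (n : ℕ) :
    partSum y₀ g t n ∈ C := by
  classical
  set μ : ℕ → ℝ := fun i => (g i).2 with hμ
  set A : ℝ := ∑ i ∈ Finset.range n, t i * μ i with hA
  have hApos : 0 ≤ A := Finset.sum_nonneg fun i _ => mul_nonneg (ht0 i) (le_of_lt (hQ i).2.2.1)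
  have hA2 : A ≤ 1/2 := by
    have hb : ∀ i ∈ Finset.range n, t i * μ i ≤ 2 * (1/2:ℝ)^(i+3) := by
      intro i _
      exact mul_le_mul (ht2 i) ((hQ i).2.2.2) (le_of_lt (hQ i).2.2.1) (by norm_num)
    have he : ∀ i ∈ Finset.range n, 2 * (1/2:ℝ)^(i+3) = (1/4) * (1/2:ℝ)^i := by
      intro i _; rw [pow_add]; ring
    calc A ≤ ∑ i ∈ Finset.range n, 2 * (1/2:ℝ)^(i+3) := Finset.sum_le_sum hb
    _ = (1/4) * ∑ i ∈ Finset.range n, (1/2:ℝ)^i := by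
        rw [Finset.sum_congr rfl he, Finset.mul_sum]
    _ ≤ 1/2 := by
        have := sum_geometric_two_le n
        linarith
  set w : ℕ → ℝ := fun i => if i < n then t i * μ i else 1 - A with hw
  set z : ℕ → Y := fun i => if i < n then (g i).1 else y₀ with hz
  have key : partSum y₀ g t n = ∑ i ∈ Finset.range (n+1), w i • z i := by
    have hsum : ∑ i ∈ Finset.range (n+1), w i • z i
        = ∑ i ∈ Finset.range n, (t i * μ i) • (g i).1 + (1 - A) • y₀ := by
      rw [Finset.sum_range_succ]
      congr 1
      · apply Finset.sum_congr rfl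
        intro i hi
        rw [Finset.mem_range] at hi
        simp [hw, hz, hi]
      · simp [hw, hz]
    rw [hsum]
    unfold partSum sv
    have e1 : ∀ i ∈ Finset.range n, t i • ((g i).2 • ((g i).1 - y₀))
        = (t i * μ i) • (g i).1 - (t i * μ i) • y₀ := by
      intro i _
      rw [smul_smul, smul_sub, hμ]
    rw [Finset.sum_congr rfl e1, Finset.sum_sub_distrib, ← Finset.sum_smul, ← hA]
    rw [sub_smul, one_smul]
    abel
  rw [key]
  apply hconv.sum_mem
  · intro i _
    by_cases hi : i < n
    · simp only [hw, if_pos hi]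
      exact mul_nonneg (ht0 i) (le_of_lt (hQ i).2.2.1)
    · simp only [hw, if_neg hi]
      linarith
  · rw [Finset.sum_range_succ]
    have e2 : ∑ i ∈ Finset.range n, w i = A := by
      rw [hA]
      apply Finset.sum_congr rfl
      intro i hi
      rw [Finset.mem_range] at hi
      simp [hw, hi]
    rw [e2]
    simp [hw]
  · intro i _
    by_cases hi : i < n
    · simp only [hz, if_pos hi]
      exact (hQ i).1
    · simp only [hz, if_neg hi]
      exact hy₀

end Stmt8Aux

open Stmt8Aux Filter Topology in
theorem stmt_8 {Y : Type*} [MetricSpace Y] [CompleteSpace Y]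
    [AddCommGroup Y] [Module ℝ Y] [IsTopologicalAddGroup Y] [ContinuousSMul ℝ Y]
    (C : Set Y) (hclosed : IsClosed C) (hconv : Convex ℝ C)
    (hne : C.Nonempty)
    (hinfdim : ¬ FiniteDimensional ℝ (Submodule.span ℝ C)) :
    ∃ T : lp (fun _ : ℕ => ℝ) 2 →ᵃ[ℝ] Y,
      Continuous T ∧ Function.Injective T ∧
      IsClosed (T ⁻¹' C) ∧ Convex ℝ (T ⁻¹' C) ∧
      (interior (T ⁻¹' C)).Nonempty := by
  classical
  obtain ⟨c₀, hc₀⟩ := hne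
  set g₀ : ℕ → Y × ℝ := chooseSeq ((0:Y), (0:ℝ)) (PChoice c₀ C)
    (exists_PChoice c₀ hinfdim) with hg₀def
  have hspec : ∀ n, QProp c₀ C g₀ n ∧ SmallProp c₀ g₀ n := by
    intro n
    induction n using Nat.strong_induction_on with
    | _ n ih =>
      exact chooseSeq_spec ((0:Y), (0:ℝ)) (PChoice c₀ C) (exists_PChoice c₀ hinfdim)
        n g₀ (fun i => rfl) rfl (fun i hi => (ih i hi).1)
  have hQ : ∀ n, QProp c₀ C g₀ n := fun n => (hspec n).1
  have hSm : ∀ n, SmallProp c₀ g₀ n := fun n => (hspec n).2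
  -- coordinate facts
  have hcoord : ∀ (x : lp (fun _ : ℕ => ℝ) 2) (i : ℕ), |x i| ≤ ‖x‖ := by
    intro x i
    have := lp.norm_apply_le_norm (by norm_num : (2:ENNReal) ≠ 0) x i
    simpa [Real.norm_eq_abs] using this
  have hcoordC : ∀ i : ℕ, Continuous (fun x : lp (fun _ : ℕ => ℝ) 2 => x i) := by
    intro i
    refine (LipschitzWith.of_dist_le_mul (K := 1) ?_).continuous
    intro x y
    rw [NNReal.coe_one, one_mul, dist_eq_norm, dist_eq_norm]
    have h1 : x i - y i = (x - y) i := by rw [lp.coeFn_sub]; rfl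
    rw [Real.norm_eq_abs, h1]
    exact hcoord _ i
  -- step bounds
  have hstep : ∀ (x : lp (fun _ : ℕ => ℝ) 2) (m : ℕ), ‖x‖ ≤ (m:ℝ) + 1 →
      dist (partSum c₀ g₀ (fun i => 1 + x i) (m+1)) (partSum c₀ g₀ (fun i => 1 + x i) m)
        ≤ epsAt c₀ g₀ m := by
    intro x m hx
    apply dist_partSum_succ c₀ g₀ m (hSm m)
    intro i _
    calc |1 + x i| ≤ |1| + |x i| := abs_add_le _ _
    _ = 1 + |x i| := by rw [abs_one]
    _ ≤ 1 + ‖x‖ := by linarith [hcoord x i]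
    _ ≤ (m:ℝ) + 2 := by linarith
  have hstep2 : ∀ (x : lp (fun _ : ℕ => ℝ) 2) (n m : ℕ), ‖x‖ ≤ (n:ℝ) + 1 → n ≤ m →
      dist (partSum c₀ g₀ (fun i => 1 + x i) (m+1)) (partSum c₀ g₀ (fun i => 1 + x i) m)
        ≤ 1 * (1/2:ℝ)^(m+1) := by
    intro x n m hx hnm
    rw [one_mul]
    refine le_trans (hstep x m ?_) (epsAt_le c₀ g₀ m)
    calc ‖x‖ ≤ (n:ℝ) + 1 := hx
    _ ≤ (m:ℝ) + 1 := add_le_add_left (Nat.cast_le.2 hnm) 1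
  -- Cauchy and limit
  have hcauchy : ∀ x : lp (fun _ : ℕ => ℝ) 2, ∃ L : Y,
      Tendsto (fun n => partSum c₀ g₀ (fun i => 1 + x i) n) atTop (𝓝 L) := by
    intro x
    apply cauchySeq_tendsto_of_complete
    obtain ⟨N, hN⟩ := exists_nat_ge ‖x‖
    set u : ℕ → Y := fun n => partSum c₀ g₀ (fun i => 1 + x i) n with hu
    set d : ℕ → ℝ := fun n => if N ≤ n then (1/2:ℝ)^(n+1) else dist (u n) (u (n+1)) with hd
    apply cauchySeq_of_dist_le_of_summable d
    · intro n
      by_cases hn : N ≤ n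
      · simp only [hd, if_pos hn]
        have h2 := hstep2 x N n (by linarith) hn
        rw [one_mul] at h2
        rw [dist_comm]
        exact h2
      · simp only [hd, if_neg hn]
        exact le_refl _
    · rw [← summable_nat_add_iff N]
      have he : (fun n => d (n + N)) = fun n => (1/2:ℝ)^(N+1) * (1/2:ℝ)^n := by
        funext n
        simp only [hd]
        rw [if_pos (by omega)]
        rw [show n + N + 1 = (N+1) + n by omega, pow_add]
      rw [he]
      exact summable_geometric_two.mul_left _
  choose Tf hTf using hcauchy
  have hdistT : ∀ (x : lp (fun _ : ℕ => ℝ) 2) (n : ℕ), ‖x‖ ≤ (n:ℝ) + 1 →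
      dist (partSum c₀ g₀ (fun i => 1 + x i) n) (Tf x) ≤ (1/2:ℝ)^n := by
    intro x n hx
    have h1 := dist_le_geom_limit (u := fun m => partSum c₀ g₀ (fun i => 1 + x i) m)
      (a := 1) zero_le_one (n := n) (fun m hm => hstep2 x n m hx hm) (hTf x)
    rwa [one_mul] at h1
  -- continuity of partial sums
  have hPcont : ∀ n : ℕ, Continuous (fun x : lp (fun _ : ℕ => ℝ) 2 =>
      partSum c₀ g₀ (fun i => 1 + x i) n) := by
    intro n
    unfold Stmt8Aux.partSum
    apply continuous_const.add
    apply continuous_finset_sum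
    intro i _
    exact (continuous_const.add (hcoordC i)).smul continuous_const
  -- continuity of Tf
  have hTcont : Continuous Tf := by
    rw [Metric.continuous_iff]
    intro x₀ ε hε
    obtain ⟨n₁, hn₁⟩ := exists_nat_ge ‖x₀‖
    obtain ⟨n₂, hn₂⟩ := exists_pow_lt_of_lt_one (show (0:ℝ) < ε/3 by linarith)
      (by norm_num : (1/2:ℝ) < 1)
    set n := max n₁ n₂ with hn
    have hxn : ‖x₀‖ ≤ (n:ℝ) := le_trans hn₁ (Nat.cast_le.2 (le_max_left _ _))
    have hpow : (1/2:ℝ)^n < ε/3 :=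
      lt_of_le_of_lt (pow_le_pow_of_le_one (by norm_num) (by norm_num) (le_max_right _ _)) hn₂
    obtain ⟨δ, hδpos, hδ⟩ := Metric.continuous_iff.1 (hPcont n) x₀ (ε/3) (by linarith)
    refine ⟨min δ 1, lt_min hδpos one_pos, ?_⟩
    intro x hx
    have hx1 : dist x x₀ < 1 := lt_of_lt_of_le hx (min_le_right _ _)
    have hxδ : dist x x₀ < δ := lt_of_lt_of_le hx (min_le_left _ _)
    have hxnorm : ‖x‖ ≤ (n:ℝ) + 1 := by
      have h1 : ‖x‖ ≤ ‖x₀‖ + dist x x₀ := by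
        rw [dist_eq_norm]
        calc ‖x‖ = ‖x₀ + (x - x₀)‖ := by rw [add_sub_cancel]
        _ ≤ ‖x₀‖ + ‖x - x₀‖ := norm_add_le _ _
      linarith
    have hx₀norm : ‖x₀‖ ≤ (n:ℝ) + 1 := by linarith
    have h1 := hdistT x n hxnorm
    have h2 := hdistT x₀ n hx₀norm
    have h3 := hδ x hxδ
    have h4 := dist_triangle4 (Tf x) (partSum c₀ g₀ (fun i => 1 + x i) n)
      (partSum c₀ g₀ (fun i => 1 + x₀ i) n) (Tf x₀)
    have e1 : dist (Tf x) (partSum c₀ g₀ (fun i => 1 + x i) n)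
        = dist (partSum c₀ g₀ (fun i => 1 + x i) n) (Tf x) := dist_comm _ _
    linarith
  -- membership
  have hmemC : ∀ x : lp (fun _ : ℕ => ℝ) 2, ‖x‖ ≤ 1 → Tf x ∈ C := by
    intro x hx
    apply hclosed.mem_of_tendsto (hTf x)
    filter_upwards with n
    refine partSum_mem hconv hc₀ hQ (fun i => ?_) (fun i => ?_) n
    · have h1 := abs_le.1 (le_trans (hcoord x i) hx)
      linarith [h1.1]
    · have h1 := abs_le.1 (le_trans (hcoord x i) hx)
      linarith [h1.2]
  -- linear part
  have hStend : ∀ x : lp (fun _ : ℕ => ℝ) 2,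
      Tendsto (fun n => ∑ i ∈ Finset.range n, x i • sv c₀ g₀ i) atTop (𝓝 (Tf x - Tf 0)) := by
    intro x
    have he : (fun n => ∑ i ∈ Finset.range n, x i • sv c₀ g₀ i)
        = fun n => partSum c₀ g₀ (fun i => 1 + x i) n
          - partSum c₀ g₀ (fun i => 1 + (0 : lp (fun _ : ℕ => ℝ) 2) i) n := by
      funext n
      unfold Stmt8Aux.partSum
      have e0 : ∀ i ∈ Finset.range n,
          (1 + (0 : lp (fun _ : ℕ => ℝ) 2) i) • sv c₀ g₀ i = sv c₀ g₀ i := by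
        intro i _
        have h0 : (0 : lp (fun _ : ℕ => ℝ) 2) i = 0 := by rw [lp.coeFn_zero]; rfl
        rw [h0, add_zero, one_smul]
      rw [Finset.sum_congr rfl e0]
      have e1 : ∀ i ∈ Finset.range n,
          (1 + x i) • sv c₀ g₀ i = sv c₀ g₀ i + x i • sv c₀ g₀ i := by
        intro i _; rw [add_smul, one_smul]
      rw [Finset.sum_congr rfl e1, Finset.sum_add_distrib]
      abel
    rw [he]
    exact (hTf x).sub (hTf 0)
  have hLadd : ∀ x y : lp (fun _ : ℕ => ℝ) 2,
      (Tf (x + y) - Tf 0) = (Tf x - Tf 0) + (Tf y - Tf 0) := by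
    intro x y
    have h1 := hStend (x + y)
    have h2 := (hStend x).add (hStend y)
    have he : (fun n => ∑ i ∈ Finset.range n, (x + y) i • sv c₀ g₀ i)
        = fun n => (∑ i ∈ Finset.range n, x i • sv c₀ g₀ i)
          + ∑ i ∈ Finset.range n, y i • sv c₀ g₀ i := by
      funext n
      rw [← Finset.sum_add_distrib]
      apply Finset.sum_congr rfl
      intro i _
      have hxy : (x + y) i = x i + y i := by rw [lp.coeFn_add]; rfl
      rw [hxy, add_smul]
    rw [he] at h1
    exact tendsto_nhds_unique h1 h2
  have hLsmul : ∀ (c : ℝ) (x : lp (fun _ : ℕ => ℝ) 2),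
      (Tf (c • x) - Tf 0) = c • (Tf x - Tf 0) := by
    intro c x
    have h1 := hStend (c • x)
    have h2 := (hStend x).const_smul c
    have he : (fun n => ∑ i ∈ Finset.range n, (c • x) i • sv c₀ g₀ i)
        = fun n => c • ∑ i ∈ Finset.range n, x i • sv c₀ g₀ i := by
      funext n
      rw [Finset.smul_sum]
      apply Finset.sum_congr rfl
      intro i _
      have hcx : (c • x) i = c * x i := by rw [lp.coeFn_smul]; rfl
      rw [hcx, ← smul_smul]
    rw [he] at h1
    exact tendsto_nhds_unique h1 h2
  set L : lp (fun _ : ℕ => ℝ) 2 →ₗ[ℝ] Y :=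
    { toFun := fun x => Tf x - Tf 0
      map_add' := hLadd
      map_smul' := fun c x => by simpa using hLsmul c x } with hL
  set T : lp (fun _ : ℕ => ℝ) 2 →ᵃ[ℝ] Y :=
    AffineMap.mk' Tf L 0 (fun p => by
      rw [vsub_eq_sub, sub_zero, vadd_eq_add]
      show Tf p = (Tf p - Tf 0) + Tf 0
      rw [sub_add_cancel]) with hT
  have hTcoe : ⇑T = Tf := by rw [hT]; exact AffineMap.coe_mk' _ _ _ _
  -- injectivity of the linear part
  have hLinj : ∀ a : lp (fun _ : ℕ => ℝ) 2, Tf a - Tf 0 = 0 → a = 0 := by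
    intro a ha
    by_contra hane
    have hex : ∃ j, a j ≠ 0 := by
      by_contra hall
      push_neg at hall
      apply hane
      apply lp.ext
      funext i
      show a i = (0 : lp (fun _ : ℕ => ℝ) 2) i
      rw [hall i, lp.coeFn_zero]
      rfl
    obtain ⟨j, hj⟩ := hex
    have hj' : 0 < ‖a j‖ := by
      rw [norm_pos_iff]
      exact hj
    have hsum2 : Summable (fun i => ‖a i‖ ^ (2:ℝ)) := by
      have h1 := lp.memℓp a
      rw [memℓp_gen_iff (by norm_num : 0 < (2:ENNReal).toReal)] at h1
      simpa using h1
    have htend0 : Tendsto (fun i => ‖a i‖) atTop (𝓝 0) := by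
      have h1 := hsum2.tendsto_atTop_zero
      have h2 : Tendsto (fun i => Real.sqrt (‖a i‖ ^ (2:ℝ))) atTop (𝓝 (Real.sqrt 0)) :=
        (Real.continuous_sqrt.tendsto 0).comp h1
      rw [Real.sqrt_zero] at h2
      refine h2.congr fun i => ?_
      have e1 : (‖a i‖ : ℝ) ^ (2:ℝ) = ‖a i‖ ^ (2:ℕ) := by
        rw [← Real.rpow_natCast ‖a i‖ 2]
        norm_num
      rw [e1, Real.sqrt_sq (norm_nonneg _)]
    obtain ⟨N, hN⟩ := Metric.tendsto_atTop.1 htend0 ‖a j‖ hj'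
    have hNlt : ∀ i, N ≤ i → ‖a i‖ < ‖a j‖ := by
      intro i hi
      have h1 := hN i hi
      rwa [Real.dist_eq, sub_zero, abs_of_nonneg (norm_nonneg _)] at h1
    obtain ⟨k, hkmem, hkmax⟩ := Finset.exists_max_image (Finset.range (max N j + 1))
      (fun i => ‖a i‖) ⟨j, Finset.mem_range.2 (by omega)⟩
    have hkall : ∀ i, ‖a i‖ ≤ ‖a k‖ := by
      intro i
      by_cases hi : i ∈ Finset.range (max N j + 1)
      · exact hkmax i hi
      · rw [Finset.mem_range] at hi
        have hiN : N ≤ i := by omega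
        calc ‖a i‖ ≤ ‖a j‖ := le_of_lt (hNlt i hiN)
        _ ≤ ‖a k‖ := hkmax j (Finset.mem_range.2 (by omega))
    have hak : a k ≠ 0 := by
      intro h0
      have h1 : ‖a j‖ ≤ ‖a k‖ := hkmax j (Finset.mem_range.2 (by omega))
      rw [h0, norm_zero] at h1
      exact lt_irrefl _ (lt_of_lt_of_le hj' h1)
    set b : ℕ → ℝ := fun i => a i / a k with hb
    have hb1 : ∀ i, |b i| ≤ 1 := by
      intro i
      simp only [hb]
      rw [abs_div]
      have hkpos : 0 < |a k| := abs_pos.2 hak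
      rw [div_le_one hkpos]
      have h1 := hkall i
      rwa [Real.norm_eq_abs, Real.norm_eq_abs] at h1
    have hbk : b k = 1 := by
      simp only [hb]
      exact div_self hak
    have hRtend : Tendsto (fun m => partSum c₀ g₀ b m) atTop (𝓝 c₀) := by
      have he : (fun m => partSum c₀ g₀ b m)
          = fun m => c₀ + (a k)⁻¹ • ∑ i ∈ Finset.range m, a i • sv c₀ g₀ i := by
        funext m
        unfold Stmt8Aux.partSum
        congr 1
        rw [Finset.smul_sum]
        apply Finset.sum_congr rfl
        intro i _
        simp only [hb]
        rw [div_eq_inv_mul, ← smul_smul]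
      rw [he]
      have h2 : Tendsto (fun m => (a k)⁻¹ • ∑ i ∈ Finset.range m, a i • sv c₀ g₀ i) atTop
          (𝓝 ((a k)⁻¹ • (Tf a - Tf 0))) := (hStend a).const_smul _
      rw [ha, smul_zero] at h2
      have h3 := (tendsto_const_nhds (x := c₀) (f := atTop (α := ℕ))).add h2
      rwa [add_zero] at h3
    have hRstep : ∀ m, dist (partSum c₀ g₀ b (m+1)) (partSum c₀ g₀ b m) ≤ epsAt c₀ g₀ m := by
      intro m
      apply dist_partSum_succ c₀ g₀ m (hSm m)
      intro i _
      calc |b i| ≤ 1 := hb1 i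
      _ ≤ (m:ℝ) + 2 := by
          have h1 : (0:ℝ) ≤ (m:ℝ) := Nat.cast_nonneg m
          linarith
    have hηpos : 0 < etaAt c₀ g₀ k := etaAt_pos c₀ (hQ k)
    have hηnonneg : 0 ≤ min 1 (etaAt c₀ g₀ k) := le_min zero_le_one (le_of_lt hηpos)
    have hRtail : dist (partSum c₀ g₀ b (k+1)) c₀
        ≤ min 1 (etaAt c₀ g₀ k) * (1/2:ℝ)^(k+1) := by
      refine dist_le_geom_limit hηnonneg (fun m hm => ?_) hRtend
      refine le_trans (hRstep m) ?_
      exact epsAt_le_factor c₀ (show k < m by omega) (fun l _ => hQ l)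
    have hlow : etaAt c₀ g₀ k ≤ dist (partSum c₀ g₀ b (k+1)) c₀ := by
      have he : partSum c₀ g₀ b (k+1)
          = c₀ + (∑ i : Fin k, b i • sv c₀ g₀ i) + sv c₀ g₀ k := by
        unfold Stmt8Aux.partSum
        rw [Finset.sum_range_succ, hbk, one_smul, ← add_assoc]
        rw [Fin.sum_univ_eq_sum_range (fun m => b m • sv c₀ g₀ m) k]
      unfold Stmt8Aux.etaAt
      rw [he]
      exact eta_le c₀ _ _ (fun i => hb1 i)
    have hcontr : etaAt c₀ g₀ k ≤ min 1 (etaAt c₀ g₀ k) * (1/2:ℝ)^(k+1) :=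
      le_trans hlow hRtail
    have hfin : min 1 (etaAt c₀ g₀ k) * (1/2:ℝ)^(k+1) < etaAt c₀ g₀ k := by
      calc min 1 (etaAt c₀ g₀ k) * (1/2:ℝ)^(k+1)
          ≤ etaAt c₀ g₀ k * (1/2:ℝ)^(k+1) :=
            mul_le_mul_of_nonneg_right (min_le_right _ _) (by positivity)
      _ < etaAt c₀ g₀ k := mul_lt_of_lt_one_right hηpos
          (pow_lt_one₀ (by norm_num) (by norm_num) (Nat.succ_ne_zero k))
    linarith
  refine ⟨T, ?_, ?_, ?_, ?_, ?_⟩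
  · rw [hTcoe]; exact hTcont
  · intro x y hxy
    rw [hTcoe] at hxy
    have h1 : Tf (x - y) - Tf 0 = 0 := by
      calc Tf (x - y) - Tf 0 = L (x - y) := rfl
      _ = L x - L y := L.map_sub x y
      _ = (Tf x - Tf 0) - (Tf y - Tf 0) := rfl
      _ = 0 := by rw [hxy]; exact sub_self _
    have h2 := hLinj (x - y) h1
    exact sub_eq_zero.1 h2
  · rw [hTcoe]; exact IsClosed.preimage hTcont hclosed
  · exact hconv.affine_preimage T
  · have hball : Metric.ball (0 : lp (fun _ : ℕ => ℝ) 2) 1 ⊆ ⇑T ⁻¹' C := by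
      intro x hx
      rw [Set.mem_preimage, hTcoe]
      apply hmemC
      have h1 : dist x 0 < 1 := Metric.mem_ball.1 hx
      rw [dist_zero_right] at h1
      linarith
    exact ⟨0, (interior_maximal hball Metric.isOpen_ball) (Metric.mem_ball_self one_pos)⟩
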